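/- (Induced metric for the ℂP¹ model.) Let Ω ⊆ ℂ be open and let W : Ω → ℂ be continuously differentiable. Define f := (1, W) : Ω → ℂ², P := 1₂ − (f·fᴴ)/(1+|W|²), and K := [∂̄P, P]. Then at every point of Ω: tr(Kᴴ·K) = (|∂W|² + |∂̄W|²)/(1+|W|²)² and tr(Kᴴ·Kᴴ) = −2·∂W·conj(∂̄W)/(1+|W|²)². In particular, if W is holomorphic (∂̄W = 0), then tr(KᴴKᴴ) = 0 and tr(KᴴK) = |∂W|²/(1+|W|²)², so the associated immersion is conformal. -/

import Mathlib

open Matrix Complex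

attribute [local instance] Matrix.frobeniusNormedAddCommGroup Matrix.frobeniusNormedSpace

/-- The Wirtinger derivative `∂F(ξ) = (1/2)(DF(ξ)(1) − i·DF(ξ)(i))`. -/
noncomputable def wd {E : Type*} [NormedAddCommGroup E] [NormedSpace ℂ E]
    (F : ℂ → E) (ξ : ℂ) : E :=
  (2 : ℂ)⁻¹ • (fderiv ℝ F ξ 1 - Complex.I • fderiv ℝ F ξ Complex.I)

/-- The Wirtinger derivative `∂̄F(ξ) = (1/2)(DF(ξ)(1) + i·DF(ξ)(i))`. -/
noncomputable def wdbar {E : Type*} [NormedAddCommGroup E] [NormedSpace ℂ E]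
    (F : ℂ → E) (ξ : ℂ) : E :=
  (2 : ℂ)⁻¹ • (fderiv ℝ F ξ 1 + Complex.I • fderiv ℝ F ξ Complex.I)

section helperlemmas

variable {ξ : ℂ}

private lemma wdbar_const_sub (F : ℂ → ℂ) (c : ℂ) :
    wdbar (fun x => c - F x) ξ = -wdbar F ξ := by
  simp only [wdbar, fderiv_const_sub, ContinuousLinearMap.neg_apply, smul_eq_mul]
  ring

private lemma wdbar_const_add (F : ℂ → ℂ) (c : ℂ) :
    wdbar (fun x => c + F x) ξ = wdbar F ξ := by
  simp only [wdbar, fderiv_const_add]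

private lemma wdbar_neg (F : ℂ → ℂ) :
    wdbar (fun x => -F x) ξ = -wdbar F ξ := by
  simp only [wdbar, fderiv_fun_neg, ContinuousLinearMap.neg_apply, smul_eq_mul]
  ring

private lemma wdbar_mul {F G : ℂ → ℂ} (hF : DifferentiableAt ℝ F ξ)
    (hG : DifferentiableAt ℝ G ξ) :
    wdbar (fun x => F x * G x) ξ = wdbar F ξ * G ξ + F ξ * wdbar G ξ := by
  simp only [wdbar, fderiv_fun_mul hF hG, ContinuousLinearMap.add_apply,
    ContinuousLinearMap.smul_apply, smul_eq_mul]
  ring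

private lemma wdbar_conj (F : ℂ → ℂ) :
    wdbar (fun x => (starRingEnd ℂ) (F x)) ξ = (starRingEnd ℂ) (wd F ξ) := by
  have h : (fun x => (starRingEnd ℂ) (F x)) = fun x => star (F x) := rfl
  rw [h]
  simp only [wdbar, wd, fderiv_star, ContinuousLinearMap.comp_apply,
    ContinuousLinearEquiv.coe_coe, smul_eq_mul]
  simp only [starL'_apply, Complex.star_def]
  have h2 : (starRingEnd ℂ) ((2 : ℂ)⁻¹) = 2⁻¹ := by simp [Complex.ext_iff]
  rw [_root_.map_mul, _root_.map_sub, _root_.map_mul, Complex.conj_I, h2]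
  ring

private lemma wdbar_inv {F : ℂ → ℂ} (hF : DifferentiableAt ℝ F ξ) (h0 : F ξ ≠ 0) :
    wdbar (fun x => (F x)⁻¹) ξ = -(((F ξ) ^ 2)⁻¹) * wdbar F ξ := by
  have h : fderiv ℝ (fun x => (F x)⁻¹) ξ = (fderiv ℝ Inv.inv (F ξ)).comp (fderiv ℝ F ξ) :=
    fderiv_comp ξ (differentiableAt_inv h0) hF
  rw [fderiv_inv' h0] at h
  simp only [wdbar, h, ContinuousLinearMap.comp_apply, ContinuousLinearMap.neg_apply,
    ContinuousLinearMap.mulLeftRight_apply, smul_eq_mul]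
  field_simp
  ring

private lemma wdbar_matrix {p q r u : ℂ → ℂ}
    (hp : DifferentiableAt ℝ p ξ) (hq : DifferentiableAt ℝ q ξ)
    (hr : DifferentiableAt ℝ r ξ) (hu : DifferentiableAt ℝ u ξ)
    (A B C D : Matrix (Fin 2) (Fin 2) ℂ) :
    wdbar (fun x => p x • A + q x • B + r x • C + u x • D) ξ
      = wdbar p ξ • A + wdbar q ξ • B + wdbar r ξ • C + wdbar u ξ • D := by
  have h : HasFDerivAt (fun x => p x • A + q x • B + r x • C + u x • D)
      ((((fderiv ℝ p ξ).smulRight A + (fderiv ℝ q ξ).smulRight B)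
        + (fderiv ℝ r ξ).smulRight C) + (fderiv ℝ u ξ).smulRight D) ξ :=
    (((hp.hasFDerivAt.smul_const A).add (hq.hasFDerivAt.smul_const B)).add
      (hr.hasFDerivAt.smul_const C)).add (hu.hasFDerivAt.smul_const D)
  rw [wdbar]
  erw [h.fderiv]
  change (2 : ℂ)⁻¹ • ((fderiv ℝ p ξ 1 • A + fderiv ℝ q ξ 1 • B + fderiv ℝ r ξ 1 • C
    + fderiv ℝ u ξ 1 • D) + I • (fderiv ℝ p ξ I • A + fderiv ℝ q ξ I • B + fderiv ℝ r ξ I • C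
    + fderiv ℝ u ξ I • D)) = _
  simp only [wdbar]
  ext i j
  simp only [Matrix.add_apply, Matrix.smul_apply, smul_eq_mul]
  ring


set_option maxHeartbeats 4000000 in
private lemma CP1_trace_identities (Q Pm M : Matrix (Fin 2) (Fin 2) ℂ) (w a b : ℂ)
    (hne : (1 : ℂ) + w * (starRingEnd ℂ) w ≠ 0)
    (hQ : Q = ((1 + w * (starRingEnd ℂ) w) ^ 2)⁻¹ • !![
        b * (starRingEnd ℂ) w + w * (starRingEnd ℂ) a,
        (b * (starRingEnd ℂ) w + w * (starRingEnd ℂ) a) * (starRingEnd ℂ) w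
          - (1 + w * (starRingEnd ℂ) w) * (starRingEnd ℂ) a;
        (b * (starRingEnd ℂ) w + w * (starRingEnd ℂ) a) * w
          - (1 + w * (starRingEnd ℂ) w) * b,
        (b * (starRingEnd ℂ) w + w * (starRingEnd ℂ) a) * (w * (starRingEnd ℂ) w)
          - (1 + w * (starRingEnd ℂ) w) * (b * (starRingEnd ℂ) w + w * (starRingEnd ℂ) a)])
    (hPm : Pm = ((1 : ℂ) + w * (starRingEnd ℂ) w)⁻¹ •
      !![w * (starRingEnd ℂ) w, -(starRingEnd ℂ) w; -w, 1])
    (hM : M = Q * Pm - Pm * Q) :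
    (Mᴴ * M).trace
      = (a * (starRingEnd ℂ) a + b * (starRingEnd ℂ) b) / (1 + w * (starRingEnd ℂ) w) ^ 2 ∧
    (Mᴴ * Mᴴ).trace
      = -2 * a * (starRingEnd ℂ) b / (1 + w * (starRingEnd ℂ) w) ^ 2 := by
  have hcomb : ∀ (x y : ℂ) (A B : Matrix (Fin 2) (Fin 2) ℂ),
      (x • A) * (y • B) - (y • B) * (x • A) = (x * y) • (A * B - B * A) := by
    intro x y A B
    rw [smul_mul_assoc, mul_smul_comm, smul_smul, smul_mul_assoc, mul_smul_comm, smul_smul,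
      mul_comm y x, smul_sub]
  subst hQ hPm hM
  rw [hcomb]
  have h2 : ((1 : ℂ) + (starRingEnd ℂ) w * w) = 1 + w * (starRingEnd ℂ) w := by ring
  constructor
  · rw [Matrix.conjTranspose_smul, smul_mul_assoc, mul_smul_comm, smul_smul, Matrix.trace_smul]
    simp only [smul_eq_mul]
    simp only [Matrix.trace_fin_two, Matrix.conjTranspose_apply, Matrix.mul_apply,
      Matrix.sub_apply, Fin.sum_univ_two, Matrix.cons_val', Matrix.cons_val_zero,
      Matrix.cons_val_one, Matrix.head_cons, Matrix.empty_val',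
      Matrix.cons_val_fin_one, Matrix.head_fin_const, Matrix.of_apply]
    simp only [Complex.star_def, _root_.map_sub, _root_.map_add, _root_.map_mul,
      map_neg, map_inv₀, _root_.map_one, map_pow, Complex.conj_conj]
    rw [h2]
    field_simp
    ring
  · rw [Matrix.conjTranspose_smul, smul_mul_assoc, mul_smul_comm, smul_smul, Matrix.trace_smul]
    simp only [smul_eq_mul]
    simp only [Matrix.trace_fin_two, Matrix.conjTranspose_apply, Matrix.mul_apply,
      Matrix.sub_apply, Fin.sum_univ_two, Matrix.cons_val', Matrix.cons_val_zero,
      Matrix.cons_val_one, Matrix.head_cons, Matrix.empty_val',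
      Matrix.cons_val_fin_one, Matrix.head_fin_const, Matrix.of_apply]
    simp only [Complex.star_def, _root_.map_sub, _root_.map_add, _root_.map_mul,
      map_neg, map_inv₀, _root_.map_one, map_pow, Complex.conj_conj]
    rw [h2]
    field_simp
    ring

end helperlemmas

set_option maxHeartbeats 1600000 in
/-- Induced metric for the `ℂP¹` model: with `f = (1, W)`, `P = 1₂ − (f·fᴴ)/(1+|W|²)` and
`K = [∂̄P, P]`, one has `tr(KᴴK) = (|∂W|² + |∂̄W|²)/(1+|W|²)²` and
`tr(KᴴKᴴ) = −2 ∂W conj(∂̄W)/(1+|W|²)²`; in particular, for holomorphic `W` the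
associated immersion is conformal. -/
theorem metric_of_CP1_immersion (Ω : Set ℂ) (hΩ : IsOpen Ω)
    (W : ℂ → ℂ) (hW : ContDiffOn ℝ 1 W Ω)
    (f : ℂ → Fin 2 → ℂ) (hf : f = fun ξ => ![1, W ξ])
    (P : ℂ → Matrix (Fin 2) (Fin 2) ℂ)
    (hP : P = fun ξ => 1 - ((1 : ℂ) + (Complex.normSq (W ξ) : ℂ))⁻¹
      • Matrix.vecMulVec (f ξ) (star (f ξ)))
    (K : ℂ → Matrix (Fin 2) (Fin 2) ℂ)
    (hK : K = fun ξ => wdbar P ξ * P ξ - P ξ * wdbar P ξ) :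
    (∀ ξ ∈ Ω,
      ((K ξ)ᴴ * K ξ).trace
        = ((Complex.normSq (wd W ξ) + Complex.normSq (wdbar W ξ) : ℝ) : ℂ)
          / ((1 : ℂ) + (Complex.normSq (W ξ) : ℂ)) ^ 2 ∧
      ((K ξ)ᴴ * (K ξ)ᴴ).trace
        = -2 * wd W ξ * (starRingEnd ℂ) (wdbar W ξ)
          / ((1 : ℂ) + (Complex.normSq (W ξ) : ℂ)) ^ 2) ∧
    ((∀ ξ ∈ Ω, wdbar W ξ = 0) →
      ∀ ξ ∈ Ω,
        ((K ξ)ᴴ * (K ξ)ᴴ).trace = 0 ∧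
        ((K ξ)ᴴ * K ξ).trace
          = ((Complex.normSq (wd W ξ) : ℝ) : ℂ)
            / ((1 : ℂ) + (Complex.normSq (W ξ) : ℂ)) ^ 2) := by
  have key : ∀ ξ ∈ Ω,
      ((K ξ)ᴴ * K ξ).trace
        = ((Complex.normSq (wd W ξ) + Complex.normSq (wdbar W ξ) : ℝ) : ℂ)
          / ((1 : ℂ) + (Complex.normSq (W ξ) : ℂ)) ^ 2 ∧
      ((K ξ)ᴴ * (K ξ)ᴴ).trace
        = -2 * wd W ξ * (starRingEnd ℂ) (wdbar W ξ)
          / ((1 : ℂ) + (Complex.normSq (W ξ) : ℂ)) ^ 2 := by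
    intro ξ hξ
    have dW : DifferentiableAt ℝ W ξ :=
      (hW.differentiableOn one_ne_zero).differentiableAt (hΩ.mem_nhds hξ)
    have dC : DifferentiableAt ℝ (fun x => (starRingEnd ℂ) (W x)) ξ := by
      simpa only [Complex.star_def] using dW.star
    set s : ℂ → ℂ := fun x => 1 + W x * (starRingEnd ℂ) (W x) with hs_def
    have hsval : ∀ x, s x = 1 + (Complex.normSq (W x) : ℂ) := by
      intro x; simp [hs_def, Complex.mul_conj]
    have hs0 : s ξ ≠ 0 := by
      rw [hsval, show (1 : ℂ) + (Complex.normSq (W ξ) : ℂ)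
        = ((1 + Complex.normSq (W ξ) : ℝ) : ℂ) by push_cast; ring]
      have : (0 : ℝ) < 1 + Complex.normSq (W ξ) := by
        have := Complex.normSq_nonneg (W ξ); linarith
      exact_mod_cast this.ne'
    have ds : DifferentiableAt ℝ s ξ := (differentiableAt_const (1 : ℂ)).add (dW.mul dC)
    have dsi : DifferentiableAt ℝ (fun x => (s x)⁻¹) ξ := ds.inv hs0
    have dp00 : DifferentiableAt ℝ (fun x => 1 - (s x)⁻¹) ξ :=
      (differentiableAt_const (1 : ℂ)).sub dsi
    have dp01 : DifferentiableAt ℝ (fun x => -((s x)⁻¹ * (starRingEnd ℂ) (W x))) ξ :=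
      (dsi.mul dC).neg
    have dp10 : DifferentiableAt ℝ (fun x => -((s x)⁻¹ * W x)) ξ := (dsi.mul dW).neg
    have dp11 : DifferentiableAt ℝ
        (fun x => 1 - (s x)⁻¹ * (W x * (starRingEnd ℂ) (W x))) ξ :=
      (differentiableAt_const (1 : ℂ)).sub (dsi.mul (dW.mul dC))
    have hPm : P = fun x =>
        (1 - (s x)⁻¹) • (!![1, 0; 0, 0] : Matrix (Fin 2) (Fin 2) ℂ)
        + (-((s x)⁻¹ * (starRingEnd ℂ) (W x))) • !![0, 1; 0, 0]
        + (-((s x)⁻¹ * W x)) • !![0, 0; 1, 0]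
        + (1 - (s x)⁻¹ * (W x * (starRingEnd ℂ) (W x))) • !![0, 0; 0, 1] := by
      rw [hP]
      funext x
      ext i j
      fin_cases i <;> fin_cases j <;>
        simp [hf, hsval x, -Matrix.cons_vecMulVec, Matrix.vecMulVec_apply, Matrix.one_apply,
          Complex.star_def, Complex.mul_conj] <;> ring
    have hQ : wdbar P ξ =
        (wdbar (fun x => 1 - (s x)⁻¹) ξ) • (!![1, 0; 0, 0] : Matrix (Fin 2) (Fin 2) ℂ)
        + (wdbar (fun x => -((s x)⁻¹ * (starRingEnd ℂ) (W x))) ξ) • !![0, 1; 0, 0]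
        + (wdbar (fun x => -((s x)⁻¹ * W x)) ξ) • !![0, 0; 1, 0]
        + (wdbar (fun x => 1 - (s x)⁻¹ * (W x * (starRingEnd ℂ) (W x))) ξ) • !![0, 0; 0, 1] := by
      rw [hPm]
      exact wdbar_matrix dp00 dp01 dp10 dp11 _ _ _ _
    have hds : wdbar s ξ
        = wdbar W ξ * (starRingEnd ℂ) (W ξ) + W ξ * (starRingEnd ℂ) (wd W ξ) := by
      have h1 : wdbar s ξ = wdbar (fun x => W x * (starRingEnd ℂ) (W x)) ξ := by
        rw [hs_def]; exact wdbar_const_add _ 1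
      rw [h1, wdbar_mul dW dC, wdbar_conj]
    have hdsi : wdbar (fun x => (s x)⁻¹) ξ = -(((s ξ) ^ 2)⁻¹) * wdbar s ξ :=
      wdbar_inv ds hs0
    have h00 : wdbar (fun x => 1 - (s x)⁻¹) ξ = ((s ξ) ^ 2)⁻¹ * wdbar s ξ := by
      rw [wdbar_const_sub (fun x => (s x)⁻¹) 1, hdsi]; ring
    have h01 : wdbar (fun x => -((s x)⁻¹ * (starRingEnd ℂ) (W x))) ξ
        = ((s ξ) ^ 2)⁻¹ * wdbar s ξ * (starRingEnd ℂ) (W ξ)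
          - (s ξ)⁻¹ * (starRingEnd ℂ) (wd W ξ) := by
      rw [wdbar_neg, wdbar_mul dsi dC, hdsi, wdbar_conj]; ring
    have h10 : wdbar (fun x => -((s x)⁻¹ * W x)) ξ
        = ((s ξ) ^ 2)⁻¹ * wdbar s ξ * W ξ - (s ξ)⁻¹ * wdbar W ξ := by
      rw [wdbar_neg, wdbar_mul dsi dW, hdsi]; ring
    have h11 : wdbar (fun x => 1 - (s x)⁻¹ * (W x * (starRingEnd ℂ) (W x))) ξ
        = ((s ξ) ^ 2)⁻¹ * wdbar s ξ * (W ξ * (starRingEnd ℂ) (W ξ))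
          - (s ξ)⁻¹ * (wdbar W ξ * (starRingEnd ℂ) (W ξ)
            + W ξ * (starRingEnd ℂ) (wd W ξ)) := by
      rw [wdbar_const_sub (fun x => (s x)⁻¹ * (W x * (starRingEnd ℂ) (W x))) 1,
        wdbar_mul (G := fun x => W x * (starRingEnd ℂ) (W x)) dsi (dW.mul dC), hdsi, wdbar_mul dW dC, wdbar_conj]; ring
    -- abbreviations
    set w : ℂ := W ξ with hw
    set a : ℂ := wd W ξ with ha
    set b : ℂ := wdbar W ξ with hb
    have hsξ : s ξ = 1 + w * (starRingEnd ℂ) w := rfl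
    have hne : (1 : ℂ) + w * (starRingEnd ℂ) w ≠ 0 := by rw [← hsξ]; exact hs0
    have hdd : wdbar s ξ = b * (starRingEnd ℂ) w + w * (starRingEnd ℂ) a := hds
    clear_value w a b
    have hQm : wdbar P ξ = ((1 + w * (starRingEnd ℂ) w) ^ 2)⁻¹ • !![
        b * (starRingEnd ℂ) w + w * (starRingEnd ℂ) a,
        (b * (starRingEnd ℂ) w + w * (starRingEnd ℂ) a) * (starRingEnd ℂ) w
          - (1 + w * (starRingEnd ℂ) w) * (starRingEnd ℂ) a;
        (b * (starRingEnd ℂ) w + w * (starRingEnd ℂ) a) * w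
          - (1 + w * (starRingEnd ℂ) w) * b,
        (b * (starRingEnd ℂ) w + w * (starRingEnd ℂ) a) * (w * (starRingEnd ℂ) w)
          - (1 + w * (starRingEnd ℂ) w) * (b * (starRingEnd ℂ) w + w * (starRingEnd ℂ) a)] := by
      rw [hQ, h00, h01, h10, h11, hdd, hsξ]
      ext i j
      fin_cases i <;> fin_cases j <;>
        simp [Matrix.add_apply, Matrix.smul_apply, smul_eq_mul] <;>
        field_simp [hne] <;> ring
    have hPξ : P ξ = ((1 : ℂ) + w * (starRingEnd ℂ) w)⁻¹ •
        !![w * (starRingEnd ℂ) w, -(starRingEnd ℂ) w; -w, 1] := by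
      have hne' : (1 : ℂ) + W ξ * (starRingEnd ℂ) (W ξ) ≠ 0 := by rw [← hw]; exact hne
      rw [hPm]
      ext i j
      fin_cases i <;> fin_cases j <;>
        simp [hw, hsξ, Matrix.add_apply, Matrix.smul_apply, smul_eq_mul] <;>
        field_simp [hne'] <;> ring
    have hKξ : K ξ = wdbar P ξ * P ξ - P ξ * wdbar P ξ := by rw [hK]
    obtain ⟨e1, e2⟩ := CP1_trace_identities (wdbar P ξ) (P ξ) (K ξ) w a b hne hQm hPξ hKξ
    have hcast : ((Complex.normSq a + Complex.normSq b : ℝ) : ℂ)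
        = a * (starRingEnd ℂ) a + b * (starRingEnd ℂ) b := by
      push_cast
      rw [Complex.mul_conj, Complex.mul_conj]
    have hcast2 : ((1 : ℂ) + (Complex.normSq w : ℂ)) = 1 + w * (starRingEnd ℂ) w := by
      rw [Complex.mul_conj]
    refine ⟨?_, ?_⟩
    · rw [e1, ← hcast, ← hcast2]
    · rw [e2, ← hcast2]
  refine ⟨key, ?_⟩
  intro hhol ξ hξ
  obtain ⟨h1, h2⟩ := key ξ hξ
  rw [hhol ξ hξ] at h1 h2
  refine ⟨by simpa using h2, ?_⟩
  simpa using h1
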